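/- The presentation (a, b, c | ab, bc, ac⁻¹) of ℤ is not equivalent via composition, inversion, cancellation, and stabilization moves alone to any presentation with fewer than 3 generators, because every relator obtained by these moves (without replacement) from relators of even total exponent sum again has even total exponent sum, whereas a presentation of ℤ with k < 3 generators whose relators all have even total exponent sum would present a group admitting a surjection onto (ℤ/2ℤ)^k with k < 3 while the original quotient (ℤ/2ℤ)³-abelianization invariant has rank 3 over ℤ/2ℤ. -/

import Mathlib

/-- A finite group presentation: `n` generators and a finite list of relators in the
free group on those generators. -/
structure GroupPres where
  n : ℕ
  rels : List (FreeGroup (Fin n))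

/-- A single stable Andrews–Curtis transformation (composition, inversion, cancellation
or stabilization — no replacement). -/
inductive SACStep : GroupPres → GroupPres → Prop
  /-- Replace the relator `rᵢ` with `rᵢ * rⱼ` for some `j ≠ i`. -/
  | composition {n : ℕ} (rels : List (FreeGroup (Fin n))) (i j : Fin rels.length)
      (hij : i ≠ j) :
      SACStep ⟨n, rels⟩ ⟨n, rels.set i (rels.get i * rels.get j)⟩
  /-- Replace the relator `rᵢ` with `rᵢ⁻¹`. -/
  | inversion {n : ℕ} (rels : List (FreeGroup (Fin n))) (i : Fin rels.length) :
      SACStep ⟨n, rels⟩ ⟨n, rels.set i (rels.get i)⁻¹⟩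
  /-- Replace a relator `rᵢ = u·g·g⁻¹·v`, with `g` a generator or its inverse,
  with `u·v`. -/
  | cancellation {n : ℕ} (rels : List (FreeGroup (Fin n))) (i : Fin rels.length)
      (u v g : FreeGroup (Fin n)) (x : Fin n)
      (hg : g = FreeGroup.of x ∨ g = (FreeGroup.of x)⁻¹)
      (hr : rels.get i = u * (g * g⁻¹) * v) :
      SACStep ⟨n, rels⟩ ⟨n, rels.set i (u * v)⟩
  /-- Add a new generator, which is also added as a relator. -/
  | stabilization {n : ℕ} (rels : List (FreeGroup (Fin n))) :
      SACStep ⟨n, rels⟩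
        ⟨n + 1, (rels.map (FreeGroup.map Fin.castSucc)) ++ [FreeGroup.of (Fin.last n)]⟩

namespace StmtAux

/-- mod-2 exponent vector of a word, as an element of `ℕ → ZMod 2`. -/
noncomputable def phi (n : ℕ) : FreeGroup (Fin n) →* Multiplicative (ℕ → ZMod 2) :=
  FreeGroup.lift (fun i => Multiplicative.ofAdd (Pi.single (i : ℕ) (1 : ZMod 2)))

noncomputable def vec {n : ℕ} (r : FreeGroup (Fin n)) : ℕ → ZMod 2 :=
  Multiplicative.toAdd (phi n r)

lemma vec_mul {n : ℕ} (r s : FreeGroup (Fin n)) : vec (r * s) = vec r + vec s := by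
  simp [vec]

lemma vec_inv {n : ℕ} (r : FreeGroup (Fin n)) : vec r⁻¹ = - vec r := by
  simp [vec]

lemma vec_of {n : ℕ} (i : Fin n) : vec (FreeGroup.of i) = Pi.single (i : ℕ) 1 := by
  simp [vec, phi]

lemma vec_map {n : ℕ} (r : FreeGroup (Fin n)) :
    vec (FreeGroup.map Fin.castSucc r) = vec r := by
  have : (phi (n+1)).comp (FreeGroup.map Fin.castSucc) = phi n := by
    apply FreeGroup.ext_hom
    intro a
    simp [phi]
  simp only [vec]
  rw [← this]
  rfl

def relSet (n : ℕ) (rels : List (FreeGroup (Fin n))) : Set (ℕ → ZMod 2) :=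
  (fun r => vec r) '' {r | r ∈ rels}

def tailSet (n : ℕ) : Set (ℕ → ZMod 2) :=
  {w | ∃ k, n ≤ k ∧ w = Pi.single k 1}

/-- The invariant. -/
noncomputable def acInv (P : GroupPres) : Submodule (ZMod 2) (ℕ → ZMod 2) :=
  Submodule.span (ZMod 2) (relSet P.n P.rels ∪ tailSet P.n)

lemma vec_mem_acInv {n : ℕ} {rels : List (FreeGroup (Fin n))} {r : FreeGroup (Fin n)}
    (hr : r ∈ rels) : vec r ∈ acInv ⟨n, rels⟩ :=
  Submodule.subset_span (Or.inl ⟨r, hr, rfl⟩)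

/-- Generic lemma for a single-relator replacement. -/
lemma acInv_set {n : ℕ} (rels : List (FreeGroup (Fin n))) (i : Fin rels.length)
    (x : FreeGroup (Fin n))
    (h1 : vec x ∈ acInv ⟨n, rels⟩)
    (h2 : vec (rels.get i) ∈ acInv ⟨n, rels.set i x⟩) :
    acInv ⟨n, rels.set i x⟩ = acInv ⟨n, rels⟩ := by
  apply le_antisymm
  · apply Submodule.span_le.2
    rintro w (⟨r, hr, rfl⟩ | hw)
    · rcases List.mem_or_eq_of_mem_set hr with hr' | hx
      · exact vec_mem_acInv hr'
      · rw [hx]; exact h1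
    · exact Submodule.subset_span (Or.inr hw)
  · apply Submodule.span_le.2
    rintro w (⟨r, hr, rfl⟩ | hw)
    · rcases List.mem_iff_get.1 hr with ⟨k, rfl⟩
      by_cases hk : (k : ℕ) = (i : ℕ)
      · have : rels.get k = rels.get i := by
          congr 1; exact Fin.ext hk
        rw [this]; exact h2
      · apply vec_mem_acInv (rels := rels.set i x)
        have hlen : (k : ℕ) < (rels.set i x).length := by
          simpa using k.isLt
        have : (rels.set i x)[(k : ℕ)] = rels[(k : ℕ)] :=
          List.getElem_set_ne (Ne.symm hk) hlen
        rw [List.get_eq_getElem, ← this]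
        exact List.getElem_mem hlen
    · exact Submodule.subset_span (Or.inr hw)

lemma mem_set_self {α : Type*} (rels : List α) (i : Fin rels.length) (x : α) :
    x ∈ rels.set i x := by
  have hlen : (i : ℕ) < (rels.set i x).length := by simpa using i.isLt
  have h := List.getElem_mem hlen
  rwa [List.getElem_set_self hlen] at h

lemma mem_set_ne {α : Type*} (rels : List α) (i j : Fin rels.length) (x : α)
    (hij : (j : ℕ) ≠ (i : ℕ)) : rels.get j ∈ rels.set i x := by
  have hlen : (j : ℕ) < (rels.set i x).length := by simpa using j.isLt
  have : (rels.set i x)[(j : ℕ)] = rels[(j : ℕ)] := List.getElem_set_ne (Ne.symm hij) hlen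
  rw [List.get_eq_getElem, ← this]
  exact List.getElem_mem hlen

lemma acInv_step {P Q : GroupPres} (h : SACStep P Q) : acInv P = acInv Q := by
  cases h with
  | composition rels i j hij =>
    apply (acInv_set _ _ _ ?_ ?_).symm
    · rw [vec_mul]
      exact add_mem (vec_mem_acInv (List.get_mem _ _)) (vec_mem_acInv (List.get_mem _ _))
    · have hx : vec (rels.get i * rels.get j) ∈ acInv ⟨_, rels.set i (rels.get i * rels.get j)⟩ :=
        vec_mem_acInv (mem_set_self _ _ _)
      have hj : vec (rels.get j) ∈ acInv ⟨_, rels.set i (rels.get i * rels.get j)⟩ :=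
        vec_mem_acInv (mem_set_ne _ _ _ _ (by exact fun hc => hij (Fin.ext hc).symm))
      have := sub_mem hx hj
      rwa [vec_mul, add_sub_cancel_right] at this
  | inversion rels i =>
    apply (acInv_set _ _ _ ?_ ?_).symm
    · rw [vec_inv]
      exact neg_mem (vec_mem_acInv (List.get_mem _ _))
    · have hx : vec (rels.get i)⁻¹ ∈ acInv ⟨_, rels.set i (rels.get i)⁻¹⟩ :=
        vec_mem_acInv (mem_set_self _ _ _)
      have := neg_mem hx
      rwa [vec_inv, neg_neg] at this
  | cancellation rels i u v g x hg hr =>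
    have key : rels.get i = u * v := by
      rw [hr, mul_inv_cancel, mul_one]
    apply (acInv_set _ _ _ ?_ ?_).symm
    · rw [← key]; exact vec_mem_acInv (List.get_mem _ _)
    · rw [key]; exact vec_mem_acInv (mem_set_self _ _ _)
  | stabilization rels =>
    unfold acInv
    congr 1
    ext w
    simp only [relSet, tailSet, Set.mem_union, Set.mem_image, Set.mem_setOf_eq,
      List.mem_append, List.mem_map, List.mem_singleton]
    constructor
    · rintro (⟨r, hr, rfl⟩ | ⟨k, hk, rfl⟩)
      · exact Or.inl ⟨FreeGroup.map Fin.castSucc r, ⟨Or.inl ⟨r, hr, rfl⟩, vec_map r⟩⟩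
      · rcases eq_or_lt_of_le hk with hkn | hkn
        · refine Or.inl ⟨FreeGroup.of (Fin.last _), Or.inr rfl, ?_⟩
          rw [vec_of]
          simp [← hkn]
        · exact Or.inr ⟨k, hkn, rfl⟩
    · rintro (⟨r', hr', rfl⟩ | ⟨k, hk, rfl⟩)
      · rcases hr' with ⟨a, ha, rfl⟩ | rfl
        · exact Or.inl ⟨a, ha, (vec_map a).symm⟩
        · refine Or.inr ⟨_, le_rfl, ?_⟩
          rw [vec_of, Fin.val_last]
      · exact Or.inr ⟨k, le_of_lt hk, rfl⟩



lemma acInv_eqvGen {P Q : GroupPres} (h : Relation.EqvGen SACStep P Q) :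
    acInv P = acInv Q := by
  induction h with
  | rel _ _ h => exact acInv_step h
  | refl _ => rfl
  | symm _ _ _ ih => exact ih.symm
  | trans _ _ _ _ _ ih1 ih2 => exact ih1.trans ih2

noncomputable def psi : (ℕ → ZMod 2) →ₗ[ZMod 2] ZMod 2 :=
  (LinearMap.proj (R := ZMod 2) (φ := fun _ : ℕ => ZMod 2) 0) +
    (LinearMap.proj (R := ZMod 2) (φ := fun _ : ℕ => ZMod 2) 1) +
    (LinearMap.proj (R := ZMod 2) (φ := fun _ : ℕ => ZMod 2) 2)

lemma psi_apply (f : ℕ → ZMod 2) : psi f = f 0 + f 1 + f 2 := rfl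

lemma single_two_not_mem : (Pi.single 2 1 : ℕ → ZMod 2) ∉
    acInv ⟨3, [FreeGroup.of 0 * FreeGroup.of 1, FreeGroup.of 1 * FreeGroup.of 2,
      FreeGroup.of 0 * (FreeGroup.of 2)⁻¹]⟩ := by
  intro hmem
  have hker : acInv ⟨3, [FreeGroup.of 0 * FreeGroup.of 1, FreeGroup.of 1 * FreeGroup.of 2,
      FreeGroup.of 0 * (FreeGroup.of 2)⁻¹]⟩ ≤ LinearMap.ker psi := by
    apply Submodule.span_le.2
    rintro w (⟨r, hr, rfl⟩ | ⟨k, hk, rfl⟩)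
    · simp only [Set.mem_setOf_eq, List.mem_cons, List.not_mem_nil, or_false] at hr
      have h0 : ((0 : Fin 3) : ℕ) = 0 := rfl
      have h1 : ((1 : Fin 3) : ℕ) = 1 := rfl
      have h2 : ((2 : Fin 3) : ℕ) = 2 := rfl
      rcases hr with rfl | rfl | rfl <;>
        simp [LinearMap.mem_ker, psi_apply, vec_mul, vec_inv, vec_of, h0, h1, h2,
          Pi.single_apply] <;> decide
    · have hk3 : 3 ≤ k := hk
      have e0 : (0 : ℕ) ≠ k := by omega
      have e1 : (1 : ℕ) ≠ k := by omega
      have e2 : (2 : ℕ) ≠ k := by omega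
      simp [LinearMap.mem_ker, psi_apply, Pi.single_eq_of_ne e0, Pi.single_eq_of_ne e1,
        Pi.single_eq_of_ne e2]
  have := hker hmem
  simp [LinearMap.mem_ker, psi_apply, Pi.single_apply] at this

end StmtAux

/-- The presentation (a, b, c | ab, bc, ac⁻¹) of ℤ is not equivalent, via composition,
inversion, cancellation and stabilization moves (and their inverses) alone, to any
presentation with fewer than 3 generators. -/
theorem stmt11 (P : GroupPres)
    (h : Relation.EqvGen SACStep
      ⟨3, [FreeGroup.of 0 * FreeGroup.of 1, FreeGroup.of 1 * FreeGroup.of 2,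
           FreeGroup.of 0 * (FreeGroup.of 2)⁻¹]⟩ P) :
    3 ≤ P.n := by
  by_contra hn
  have he := StmtAux.acInv_eqvGen h
  have hmem : (Pi.single 2 1 : ℕ → ZMod 2) ∈ StmtAux.acInv P :=
    Submodule.subset_span (Or.inr ⟨2, by omega, rfl⟩)
  rw [← he] at hmem
  exact StmtAux.single_two_not_mem hmem
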